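/- Let (r_n) be a sequence with 0 < r_n < 1 and (p_n) a probability sequence with p_n > 0 such that s = lim_{n→∞} (log p_n)/(log r_n) exists and is finite. If ∑_{n} p_n (−log p_n) = ∞ (infinite entropy), then s ≤ s_∞, where s_∞ = inf { t ≥ 0 : ∑_n r_n^t < ∞ }. Consequently, combined with the reverse inequality, s = s_∞. -/
import Mathlib


open Filter

theorem decay_ratio_eq_convergence_exponent (r p : ℕ → ℝ)
    (hr : ∀ n, 0 < r n) (hr1 : ∀ n, r n < 1) (hp : ∀ n, 0 < p n) (hpsum : HasSum p 1)
    (s : ℝ)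
    (hlim : Tendsto (fun n => Real.log (p n) / Real.log (r n)) atTop (nhds s))
    (hr0 : Tendsto r atTop (nhds 0))
    (hent : ¬ Summable (fun n => p n * (-Real.log (p n)))) :
    s ≤ sInf {t : ℝ | 0 ≤ t ∧ Summable (fun n => r n ^ t)} ∧
      s = sInf {t : ℝ | 0 ≤ t ∧ Summable (fun n => r n ^ t)} := by
  set S : Set ℝ := {t : ℝ | 0 ≤ t ∧ Summable (fun n => r n ^ t)} with hS
  have hlogr : ∀ n, Real.log (r n) < 0 := fun n => Real.log_neg (hr n) (hr1 n)
  have hp1 : ∀ n, p n ≤ 1 := fun n => le_hasSum hpsum n (fun i _ => (hp i).le)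
  have hlogp : ∀ n, Real.log (p n) ≤ 0 := fun n => Real.log_nonpos (hp n).le (hp1 n)
  -- s ≥ 0
  have hs0 : 0 ≤ s := by
    refine ge_of_tendsto' hlim (fun n => ?_)
    have := hlogp n
    have := hlogr n
    rw [div_nonneg_iff]
    right
    exact ⟨hlogp n, (hlogr n).le⟩
  -- Lemma A: for t > s, r^t is summable
  have hA : ∀ t : ℝ, s < t → Summable (fun n => r n ^ t) := by
    intro t ht
    have hev : ∀ᶠ n in atTop, r n ^ t ≤ p n := by
      filter_upwards [hlim.eventually_lt_const ht] with n hn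
      have hb := hlogr n
      rw [div_lt_iff_of_neg hb] at hn
      have : r n ^ t = Real.exp (t * Real.log (r n)) := by
        rw [Real.rpow_def_of_pos (hr n), mul_comm]
      rw [this, ← Real.exp_log (hp n)]
      exact (Real.exp_le_exp.2 hn.le)
    obtain ⟨N, hN⟩ := eventually_atTop.1 hev
    have h1 : Summable (fun n => p (n + N)) := (summable_nat_add_iff N).2 hpsum.summable
    have h2 : Summable (fun n => r (n + N) ^ t) :=
      Summable.of_nonneg_of_le (fun n => Real.rpow_nonneg (hr _).le _)
        (fun n => hN (n + N) (Nat.le_add_left _ _)) h1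
    exact (summable_nat_add_iff N).1 h2
  -- Lemma B: every element of S is ≥ s
  have hB : ∀ t ∈ S, s ≤ t := by
    rintro t ⟨ht0, hts⟩
    by_contra hlt
    push_neg at hlt
    set t' : ℝ := (t + s) / 2 with ht'
    have htt' : t < t' := by rw [ht']; linarith
    have ht's : t' < s := by rw [ht']; linarith
    have hd : (0:ℝ) < t' - t := by linarith
    -- r n → 0 within (0, ∞)
    have hr0' : Tendsto r atTop (nhdsWithin 0 (Set.Ioi 0)) :=
      tendsto_nhdsWithin_of_tendsto_nhds_of_eventually_within r hr0
        (Eventually.of_forall hr)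
    have hten : Tendsto (fun n => Real.log (r n) * r n ^ (t' - t)) atTop (nhds 0) :=
      (tendsto_log_mul_rpow_nhdsGT_zero hd).comp hr0'
    have hev3 : ∀ᶠ n in atTop, (-1:ℝ) ≤ Real.log (r n) * r n ^ (t' - t) :=
      hten.eventually (eventually_ge_nhds (by norm_num : (-1:ℝ) < 0))
    have hev1 : ∀ᶠ n in atTop, p n ≤ r n ^ t' := by
      filter_upwards [hlim.eventually_const_lt ht's] with n hn
      have hb := hlogr n
      rw [lt_div_iff_of_neg hb] at hn
      have h1 : p n = Real.exp (Real.log (p n)) := (Real.exp_log (hp n)).symm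
      rw [h1, Real.rpow_def_of_pos (hr n), mul_comm]
      exact Real.exp_le_exp.2 hn.le
    have hev2 : ∀ᶠ n in atTop, -Real.log (p n) ≤ (s + 1) * (-Real.log (r n)) := by
      filter_upwards [hlim.eventually_lt_const (show s < s + 1 by linarith)] with n hn
      have hb := hlogr n
      rw [div_lt_iff_of_neg hb] at hn
      nlinarith
    have hbound : ∀ᶠ n in atTop, p n * (-Real.log (p n)) ≤ (s + 1) * r n ^ t := by
      filter_upwards [hev1, hev2, hev3] with n h1 h2 h3
      have hrt : (0:ℝ) ≤ r n ^ t := Real.rpow_nonneg (hr n).le _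
      have hrt' : r n ^ t' = r n ^ t * r n ^ (t' - t) := by
        rw [← Real.rpow_add (hr n)]; ring_nf
      have hnp : 0 ≤ -Real.log (p n) := by linarith [hlogp n]
      have hs1 : (0:ℝ) < s + 1 := by linarith
      calc p n * (-Real.log (p n)) ≤ r n ^ t' * ((s + 1) * (-Real.log (r n))) := by
            apply mul_le_mul h1 h2 hnp (Real.rpow_nonneg (hr n).le _)
        _ = (s + 1) * r n ^ t * (-(Real.log (r n) * r n ^ (t' - t))) := by
            rw [hrt']; ring
        _ ≤ (s + 1) * r n ^ t * 1 := by
            apply mul_le_mul_of_nonneg_left (by linarith) (by positivity)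
        _ = (s + 1) * r n ^ t := by ring
    obtain ⟨N, hN⟩ := eventually_atTop.1 hbound
    have hsum2 : Summable (fun n => (s + 1) * r (n + N) ^ t) :=
      (((summable_nat_add_iff N).2 hts).mul_left _)
    have hnn : ∀ n : ℕ, 0 ≤ p n * (-Real.log (p n)) := by
      intro n
      exact mul_nonneg (hp n).le (by linarith [hlogp n])
    have hsum3 : Summable (fun n => p (n + N) * (-Real.log (p (n + N)))) :=
      Summable.of_nonneg_of_le (fun n => hnn _) (fun n => hN (n + N) (Nat.le_add_left _ _)) hsum2
    exact hent ((summable_nat_add_iff N).1 hsum3)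
  -- S is nonempty
  have hne : S.Nonempty := ⟨s + 1, ⟨by linarith, hA _ (by linarith)⟩⟩
  have hbdd : BddBelow S := ⟨0, fun x hx => hx.1⟩
  have hle : s ≤ sInf S := le_csInf hne hB
  have hge : sInf S ≤ s := by
    by_contra hc
    push_neg at hc
    have hmem : (s + sInf S) / 2 ∈ S := ⟨by linarith, hA _ (by linarith)⟩
    have := csInf_le hbdd hmem
    linarith
  exact ⟨hle, le_antisymm hle hge⟩
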